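/- arXiv:1109.3218 — 2 statements merged into one kernel-verified Lean document; each statement's English description precedes it below -/
import Mathlib

section
/- The Catalan numbers are odd exactly when n = 2^k - 1 for some k ≥ 0; that is, C_n is odd if and only if n+1 is a power of 2. -/
/-- The n-th Catalan number. -/
def catalanNum (n : ℕ) : ℕ := (2 * n).choose n / (n + 1)

lemma catalanNum_eq_catalan (n : ℕ) : catalanNum n = catalan n := by
  rw [catalan_eq_centralBinom_div, Nat.centralBinom, catalanNum]

open Finset in
lemma catalan_cast_succ (n : ℕ) :
    (catalan (n + 1) : ZMod 2) = ∑ i ∈ range (n + 1), (catalan i : ZMod 2) * catalan (n - i) := by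
  rw [catalan_succ, Fin.sum_univ_eq_sum_range (fun i => catalan i * catalan (n - i))]
  push_cast
  rfl

open Finset in
lemma catalan_odd_rec (n : ℕ) :
    Odd (catalan (n + 1)) ↔ Even n ∧ Odd (catalan (n / 2)) := by
  rw [← ZMod.natCast_eq_one_iff_odd, ← ZMod.natCast_eq_one_iff_odd, catalan_cast_succ]
  set f : ℕ → ZMod 2 := fun i => (catalan i : ZMod 2) * catalan (n - i) with hf
  rcases Nat.even_or_odd n with he | ho
  · obtain ⟨m, rfl⟩ := he
    have hm : m ∈ range (m + m + 1) := by simp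
    rw [← Finset.add_sum_erase _ f hm]
    have hz : ∑ i ∈ (range (m + m + 1)).erase m, f i = 0 := by
      apply Finset.sum_involution (g := fun a _ => m + m - a)
      · intro a ha
        have h1 : a ≤ m + m := by simp at ha; omega
        have : m + m - (m + m - a) = a := by omega
        simp only [hf, this]
        have h2 : ∀ x y : ZMod 2, x * y + y * x = 0 := by decide
        exact h2 _ _
      · intro a ha _
        simp at ha
        omega
      · intro a ha
        simp at ha ⊢
        omega
      · intro a ha
        simp at ha
        omega
    rw [hz, add_zero]
    have hfm : f m = (catalan m : ZMod 2) := by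
      simp only [hf]
      have h1 : m + m - m = m := by omega
      have h2 : ∀ x : ZMod 2, x * x = x := by decide
      rw [h1, h2]
    rw [hfm]
    have hm2 : (m + m) / 2 = m := by omega
    rw [hm2]
    exact ⟨fun h => ⟨⟨m, rfl⟩, h⟩, fun h => h.2⟩
  · have hz : ∑ i ∈ range (n + 1), f i = 0 := by
      apply Finset.sum_involution (g := fun a _ => n - a)
      · intro a ha
        have h1 : a ≤ n := by simp at ha; omega
        have h3 : n - (n - a) = a := by omega
        simp only [hf, h3]
        have h2 : ∀ x y : ZMod 2, x * y + y * x = 0 := by decide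
        exact h2 _ _
      · intro a ha _
        simp at ha
        rcases ho with ⟨c, hc⟩
        omega
      · intro a ha
        simp at ha ⊢
      · intro a ha
        simp at ha
        omega
    rw [hz]
    have : ¬ Even n := Nat.not_even_iff_odd.mpr ho
    simp [this]

theorem catalan_odd_iff_aux : ∀ n : ℕ, Odd (catalan n) ↔ ∃ k : ℕ, n + 1 = 2 ^ k := by
  intro n
  induction n using Nat.strong_induction_on with
  | _ n ih =>
    match n with
    | 0 => simp [catalan_zero]; exact ⟨0, rfl⟩
    | n + 1 =>
      rw [catalan_odd_rec, ih (n / 2) (by omega)]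
      constructor
      · rintro ⟨⟨m, rfl⟩, k, hk⟩
        refine ⟨k + 1, ?_⟩
        have : (m + m) / 2 = m := by omega
        rw [this] at hk
        rw [pow_succ]
        omega
      · rintro ⟨k, hk⟩
        match k with
        | 0 => omega
        | k + 1 =>
          rw [pow_succ] at hk
          constructor
          · exact ⟨2 ^ k - 1, by omega⟩
          · exact ⟨k, by omega⟩

/-- `C n` is odd iff `n + 1` is a power of 2. -/
theorem catalan_odd_iff (n : ℕ) :
    Odd (catalanNum n) ↔ ∃ k : ℕ, n + 1 = 2 ^ k := by
  rw [catalanNum_eq_catalan]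
  exact catalan_odd_iff_aux n
end

section
/- For n ≥ 2, any two triangulations of a convex polygon with n+2 vertices can be transformed into each other by a sequence of at most 2n-2 diagonal flips. -/
/-- `e` is a diagonal of the convex polygon with `n+2` vertices `0,...,n+1`
(ordered pair with `e.1 < e.2`, endpoints not adjacent on the polygon). -/
def IsDiag (n : ℕ) (e : Fin (n + 2) × Fin (n + 2)) : Prop :=
  e.1 < e.2 ∧ ¬(((e.2 : ℕ) = (e.1 : ℕ) + 1) ∨ ((e.1 : ℕ) = 0 ∧ (e.2 : ℕ) = n + 1))

/-- Two chords of the convex polygon cross (interiors intersect). -/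
def Cross (n : ℕ) (e f : Fin (n + 2) × Fin (n + 2)) : Prop :=
  (e.1 < f.1 ∧ f.1 < e.2 ∧ e.2 < f.2) ∨ (f.1 < e.1 ∧ e.1 < f.2 ∧ f.2 < e.2)

/-- A triangulation of the convex polygon with `n+2` vertices: a maximal set of
pairwise non-crossing diagonals. -/
def IsTriangulation (n : ℕ) (T : Finset (Fin (n + 2) × Fin (n + 2))) : Prop :=
  (∀ e ∈ T, IsDiag n e) ∧
  (∀ e ∈ T, ∀ f ∈ T, e ≠ f → ¬ Cross n e f) ∧
  (∀ e, IsDiag n e → e ∉ T → ∃ f ∈ T, Cross n e f)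

/-- `a` and `b` are joined by a side (edge) of the polygon. -/
def IsSide (n : ℕ) (a b : Fin (n + 2)) : Prop :=
  a < b ∧ (((b : ℕ) = (a : ℕ) + 1) ∨ ((a : ℕ) = 0 ∧ (b : ℕ) = n + 1))

/-- A triangle of the triangulation `T`: a 3-element vertex set whose pairs are
all joined by polygon sides or diagonals of `T`. -/
def IsTriangle (n : ℕ) (T : Finset (Fin (n + 2) × Fin (n + 2)))
    (s : Finset (Fin (n + 2))) : Prop :=
  s.card = 3 ∧ ∀ a ∈ s, ∀ b ∈ s, a < b → (IsSide n a b ∨ (a, b) ∈ T)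

/-- A diagonal flip: remove one diagonal of a triangulation and replace it by
another diagonal so that the result is again a triangulation. -/
def Flip (n : ℕ) (T T' : Finset (Fin (n + 2) × Fin (n + 2))) : Prop :=
  IsTriangulation n T ∧ IsTriangulation n T' ∧
    ∃ d ∈ T, ∃ d', d' ∉ T ∧ T' = insert d' (T.erase d)

namespace FlipAux

attribute [local instance 0] Classical.propDecidable

variable {n : ℕ}

def count0 (n : ℕ) (T : Finset (Fin (n + 2) × Fin (n + 2))) : ℕ :=
  (T.filter fun e => (e.1 : ℕ) = 0).card

noncomputable def Fan (n : ℕ) : Finset (Fin (n + 2) × Fin (n + 2)) :=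
  Finset.univ.filter fun e => IsDiag n e ∧ (e.1 : ℕ) = 0

lemma cross_symm {e f : Fin (n+2) × Fin (n+2)} (h : Cross n e f) : Cross n f e := by
  rcases h with h | h
  · exact Or.inr ⟨h.1, h.2.1, h.2.2⟩
  · exact Or.inl ⟨h.1, h.2.1, h.2.2⟩

lemma side_not_crossed {u v : Fin (n+2)} (h : IsSide n u v) (f : Fin (n+2) × Fin (n+2)) :
    ¬ Cross n (u, v) f := by
  obtain ⟨h1, h2⟩ := h
  have hq : (f.2 : ℕ) ≤ n + 1 := Nat.lt_succ_iff.mp f.2.isLt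
  intro hc
  rcases hc with ⟨a, b, c⟩ | ⟨a, b, c⟩ <;>
    simp only [Fin.lt_def] at * <;> omega

lemma count0_le {T : Finset (Fin (n + 2) × Fin (n + 2))}
    (hd : ∀ e ∈ T, IsDiag n e) : count0 n T ≤ n - 1 := by
  have h : ∀ e ∈ T.filter (fun e => (e.1 : ℕ) = 0), (e.2 : ℕ) ∈ Finset.Icc 2 n := by
    intro e he
    rw [Finset.mem_filter] at he
    have hD := hd e he.1
    obtain ⟨h1, h2⟩ := hD
    have h0 := he.2
    have hq : (e.2 : ℕ) ≤ n + 1 := Nat.lt_succ_iff.mp e.2.isLt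
    simp only [Fin.lt_def] at h1
    simp only [Finset.mem_Icc]
    omega
  have hinj : ∀ e ∈ T.filter (fun e => (e.1 : ℕ) = 0),
      ∀ f ∈ T.filter (fun e => (e.1 : ℕ) = 0), (e.2 : ℕ) = (f.2 : ℕ) → e = f := by
    intro e he f hf hef
    rw [Finset.mem_filter] at he hf
    have : e.1 = f.1 := Fin.ext (he.2.trans hf.2.symm)
    exact Prod.ext this (Fin.ext hef)
  have := Finset.card_le_card_of_injOn (fun e => (e.2 : ℕ)) (fun e he => h e he)
    (fun e he f hf hef => hinj e (by simpa using he) f (by simpa using hf) hef)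
  simpa [count0, Nat.card_Icc] using this

lemma flip_symm {T T' : Finset (Fin (n + 2) × Fin (n + 2))} (h : Flip n T T') :
    Flip n T' T := by
  obtain ⟨h1, h2, d, hd, d', hd', hT'⟩ := h
  refine ⟨h2, h1, d', ?_, d, ?_, ?_⟩
  · rw [hT']; exact Finset.mem_insert_self _ _
  · rw [hT']
    intro hmem
    rcases Finset.mem_insert.mp hmem with h | h
    · exact hd' (h ▸ hd)
    · exact absurd rfl (Finset.mem_erase.mp h).1
  · rw [hT', Finset.erase_insert, Finset.insert_erase hd]
    intro hmem
    exact hd' (Finset.mem_of_mem_erase hmem)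

lemma pair_ne {a b : Fin (n+2)} {f : Fin (n+2) × Fin (n+2)}
    (h : (a : ℕ) ≠ (f.1 : ℕ) ∨ (b : ℕ) ≠ (f.2 : ℕ)) : (a, b) ≠ f := by
  intro he
  subst he
  rcases h with h | h <;> exact h rfl

lemma not_cross_edge {T : Finset (Fin (n+2) × Fin (n+2))} (hT : IsTriangulation n T)
    {a b : Fin (n+2)} (hE : IsSide n a b ∨ (a, b) ∈ T) {f} (hf : f ∈ T)
    (hne : (a, b) ≠ f) : ¬ Cross n (a, b) f := by
  rcases hE with h | h
  · exact side_not_crossed h f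
  · exact hT.2.1 _ h f hf hne

lemma mk_cross_right {f : Fin (n+2) × Fin (n+2)} {p q : Fin (n+2)}
    (h : ((f.1 : ℕ) < (p : ℕ) ∧ (p : ℕ) < (f.2 : ℕ) ∧ (f.2 : ℕ) < (q : ℕ)) ∨
         ((p : ℕ) < (f.1 : ℕ) ∧ (f.1 : ℕ) < (q : ℕ) ∧ (q : ℕ) < (f.2 : ℕ))) :
    Cross n f (p, q) := h

lemma apex {T : Finset (Fin (n+2) × Fin (n+2))} (hT : IsTriangulation n T)
    {x y : Fin (n+2)} (hx1 : 1 ≤ (x : ℕ)) (hxy : (x : ℕ) + 2 ≤ (y : ℕ))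
    (hmem : (x, y) ∈ T) :
    ∃ c : Fin (n+2), (x : ℕ) < (c : ℕ) ∧ (c : ℕ) < (y : ℕ) ∧
      (IsSide n x c ∨ (x, c) ∈ T) ∧ (IsSide n c y ∨ (c, y) ∈ T) := by
  have hy2 : (y : ℕ) ≤ n + 1 := Nat.lt_succ_iff.mp y.isLt
  set S : Finset (Fin (n+2)) := Finset.univ.filter
    (fun z => (x : ℕ) < (z : ℕ) ∧ (z : ℕ) < (y : ℕ) ∧ (IsSide n x z ∨ (x, z) ∈ T)) with hS
  have hSmem : ∀ z, z ∈ S ↔ ((x : ℕ) < (z : ℕ) ∧ (z : ℕ) < (y : ℕ) ∧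
      (IsSide n x z ∨ (x, z) ∈ T)) := by
    intro z; simp [hS]
  have hne : S.Nonempty := by
    refine ⟨⟨(x : ℕ) + 1, by omega⟩, (hSmem _).mpr ⟨by simp, by simp; omega, Or.inl ?_⟩⟩
    exact ⟨by simp only [Fin.lt_def, Fin.val_mk]; omega, Or.inl (by simp)⟩
  set c := S.max' hne with hc
  obtain ⟨hxc, hcy, hExc⟩ := (hSmem c).mp (S.max'_mem hne)
  refine ⟨c, hxc, hcy, hExc, ?_⟩
  by_contra hcyE
  have hdiag : IsDiag n (c, y) := by
    refine ⟨by simp only [Fin.lt_def, Fin.val_mk]; omega, ?_⟩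
    rintro (h | ⟨h0, -⟩)
    · exact hcyE (Or.inl ⟨by simp only [Fin.lt_def, Fin.val_mk]; omega, Or.inl h⟩)
    · have h0' : (c : ℕ) = 0 := h0; omega
  have hnotT : (c, y) ∉ T := fun h => hcyE (Or.inr h)
  obtain ⟨f, hf, hcross⟩ := hT.2.2 _ hdiag hnotT
  simp only [Cross, Fin.lt_def] at hcross
  rcases hcross with ⟨h1, h2, h3⟩ | ⟨h1, h2, h3⟩
  · -- c < f.1, f.1 < y, y < f.2 : f crosses (x,y)
    refine hT.2.1 (x, y) hmem f hf (pair_ne (Or.inl (by omega))) ?_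
    exact Or.inl ⟨by simp only [Fin.lt_def, Fin.val_mk]; omega, by simp only [Fin.lt_def, Fin.val_mk]; omega,
      by simp only [Fin.lt_def, Fin.val_mk]; omega⟩
  · -- f.1 < c, c < f.2, f.2 < y
    rcases Nat.lt_trichotomy (f.1 : ℕ) (x : ℕ) with hpx | hpx | hpx
    · -- f crosses (x,y)
      refine hT.2.1 (x, y) hmem f hf (pair_ne (Or.inl (by omega))) ?_
      exact Or.inr ⟨by simp only [Fin.lt_def, Fin.val_mk]; omega, by simp only [Fin.lt_def, Fin.val_mk]; omega,
        by simp only [Fin.lt_def, Fin.val_mk]; omega⟩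
    · -- f.1 = x : f.2 ∈ S bigger than c
      have hfx : f.1 = x := Fin.ext hpx
      have hf2S : f.2 ∈ S := by
        refine (hSmem _).mpr ⟨by omega, by omega, Or.inr ?_⟩
        have : (x, f.2) = f := by rw [← hfx]
        rwa [this]
      have := S.le_max' f.2 hf2S
      rw [← hc] at this
      simp only [Fin.le_def] at this
      omega
    · -- x < f.1 : f crosses (x,c)
      refine not_cross_edge hT hExc hf (pair_ne (Or.inl (by omega))) ?_
      exact Or.inl ⟨by simp only [Fin.lt_def, Fin.val_mk]; omega, by simp only [Fin.lt_def, Fin.val_mk]; omega,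
        by simp only [Fin.lt_def, Fin.val_mk]; omega⟩

lemma gap {T : Finset (Fin (n+2) × Fin (n+2))} (hT : IsTriangulation n T)
    {x y : Fin (n+2)} (hx1 : 1 ≤ (x : ℕ)) (hxy : (x : ℕ) + 2 ≤ (y : ℕ))
    (hx : (x : ℕ) = 1 ∨ ((0 : Fin (n+2)), x) ∈ T)
    (hy : (y : ℕ) = n + 1 ∨ ((0 : Fin (n+2)), y) ∈ T)
    (hgap : ∀ z : Fin (n+2), (x : ℕ) < (z : ℕ) → (z : ℕ) < (y : ℕ) →
      ((0 : Fin (n+2)), z) ∉ T) :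
    (x, y) ∈ T := by
  by_contra hxyT
  have hdiag : IsDiag n (x, y) := by
    refine ⟨by simp only [Fin.lt_def]; omega, ?_⟩
    rintro (h | ⟨h0, -⟩)
    · simp at h; omega
    · have h0' : (x : ℕ) = 0 := h0; omega
  obtain ⟨f, hf, hcross⟩ := hT.2.2 _ hdiag hxyT
  simp only [Cross, Fin.lt_def] at hcross
  have h0v : ((0 : Fin (n+2)) : ℕ) = 0 := rfl
  have hq2 : (f.2 : ℕ) ≤ n + 1 := Nat.lt_succ_iff.mp f.2.isLt
  rcases hcross with ⟨h1, h2, h3⟩ | ⟨h1, h2, h3⟩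
  · -- x < f.1 < y < f.2 : f crosses (0, y)
    rcases hy with hy | hy
    · omega
    · refine hT.2.1 _ hy f hf (pair_ne (Or.inl (by omega))) ?_
      exact Or.inl ⟨by simp only [Fin.lt_def]; omega, by simp only [Fin.lt_def]; omega,
        by simp only [Fin.lt_def]; omega⟩
  · -- f.1 < x < f.2 < y
    rcases Nat.eq_zero_or_pos (f.1 : ℕ) with hp0 | hp0
    · -- f = (0, f.2) with x < f.2 < y : contradicts the gap
      have hfeq : ((0 : Fin (n+2)), f.2) = f := by
        have : (0 : Fin (n+2)) = f.1 := Fin.ext (by omega)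
        rw [this]
      exact hgap f.2 (by omega) (by omega) (by rw [hfeq]; exact hf)
    · rcases hx with hx | hx
      · omega
      · refine hT.2.1 _ hx f hf (pair_ne (Or.inl (by omega))) ?_
        exact Or.inl ⟨by simp only [Fin.lt_def]; omega, by simp only [Fin.lt_def]; omega,
          by simp only [Fin.lt_def]; omega⟩

lemma flip_step {T : Finset (Fin (n+2) × Fin (n+2))} (hT : IsTriangulation n T)
    (h : ∃ e ∈ T, (e.1 : ℕ) ≠ 0) :
    ∃ T', Flip n T T' ∧ count0 n T' = count0 n T + 1 := by
  obtain ⟨e, heT, he1⟩ := h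
  obtain ⟨helt, hend⟩ := hT.1 e heT
  simp only [Fin.lt_def] at helt
  have he2 : (e.2 : ℕ) ≤ n + 1 := Nat.lt_succ_iff.mp e.2.isLt
  have hab : (e.1 : ℕ) + 2 ≤ (e.2 : ℕ) := by
    rcases Nat.lt_or_ge ((e.1 : ℕ) + 1) (e.2 : ℕ) with h' | h'
    · omega
    · exact absurd (Or.inl (by omega)) hend
  have h0v : ((0 : Fin (n+2)) : ℕ) = 0 := rfl
  -- the vertex a+1 : (0, a+1) is not in T
  set za : ℕ := (e.1 : ℕ) + 1 with hza
  have hzaval : za < n + 2 := by omega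
  have hz0 : ((0 : Fin (n+2)), (⟨za, hzaval⟩ : Fin (n+2))) ∉ T := by
    intro hzT
    refine hT.2.1 _ hzT e heT (pair_ne (Or.inl (by simp; omega))) ?_
    exact Or.inl ⟨by simp only [Fin.lt_def, Fin.val_mk]; omega,
      by simp only [Fin.lt_def, Fin.val_mk]; omega,
      by simp only [Fin.lt_def, Fin.val_mk]; omega⟩
  -- the set of "spoke" endpoints from 0
  set K : Finset (Fin (n+2)) := Finset.univ.filter
    (fun k => (k : ℕ) = 1 ∨ (k : ℕ) = n + 1 ∨ ((0 : Fin (n+2)), k) ∈ T) with hK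
  have hKmem : ∀ k, k ∈ K ↔ ((k : ℕ) = 1 ∨ (k : ℕ) = n + 1 ∨ ((0 : Fin (n+2)), k) ∈ T) := by
    intro k; simp [hK]
  have hKge1 : ∀ k ∈ K, 1 ≤ (k : ℕ) := by
    intro k hk
    rcases (hKmem k).mp hk with h' | h' | h'
    · omega
    · omega
    · have := (hT.1 _ h').1
      simp only [Fin.lt_def] at this
      omega
  set Kx : Finset (Fin (n+2)) := K.filter (fun k => (k : ℕ) < za) with hKx
  set Ky : Finset (Fin (n+2)) := K.filter (fun k => za < (k : ℕ)) with hKy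
  have hKxne : Kx.Nonempty := by
    refine ⟨⟨1, by omega⟩, ?_⟩
    simp only [hKx, Finset.mem_filter]
    exact ⟨(hKmem _).mpr (Or.inl rfl), by show (1 : ℕ) < za; omega⟩
  have hKyne : Ky.Nonempty := by
    refine ⟨⟨n + 1, by omega⟩, ?_⟩
    simp only [hKy, Finset.mem_filter]
    exact ⟨(hKmem _).mpr (Or.inr (Or.inl rfl)), by show za < n + 1; omega⟩
  set x := Kx.max' hKxne with hxdef
  set y := Ky.min' hKyne with hydef
  have hxmem : x ∈ Kx := by rw [hxdef]; exact Kx.max'_mem hKxne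
  have hymem : y ∈ Ky := by rw [hydef]; exact Ky.min'_mem hKyne
  rw [hKx, Finset.mem_filter] at hxmem
  rw [hKy, Finset.mem_filter] at hymem
  have hxlt : (x : ℕ) < za := hxmem.2
  have hylt : za < (y : ℕ) := hymem.2
  have hx1 : 1 ≤ (x : ℕ) := hKge1 _ hxmem.1
  have hy2 : (y : ℕ) ≤ n + 1 := Nat.lt_succ_iff.mp y.isLt
  have hxy : (x : ℕ) + 2 ≤ (y : ℕ) := by omega
  have hxK : (x : ℕ) = 1 ∨ ((0 : Fin (n+2)), x) ∈ T := by
    rcases (hKmem x).mp hxmem.1 with h' | h' | h'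
    · exact Or.inl h'
    · omega
    · exact Or.inr h'
  have hyK : (y : ℕ) = n + 1 ∨ ((0 : Fin (n+2)), y) ∈ T := by
    rcases (hKmem y).mp hymem.1 with h' | h' | h'
    · omega
    · exact Or.inl h'
    · exact Or.inr h'
  have hgap : ∀ z : Fin (n+2), (x : ℕ) < (z : ℕ) → (z : ℕ) < (y : ℕ) →
      ((0 : Fin (n+2)), z) ∉ T := by
    intro z h1 h2 hzT
    have hzK : z ∈ K := (hKmem z).mpr (Or.inr (Or.inr hzT))
    rcases Nat.lt_trichotomy (z : ℕ) za with h' | h' | h'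
    · have : z ∈ Kx := by rw [hKx, Finset.mem_filter]; exact ⟨hzK, h'⟩
      have := Kx.le_max' z this
      rw [← hxdef] at this
      simp only [Fin.le_def] at this
      omega
    · have : z = ⟨za, hzaval⟩ := Fin.ext h'
      rw [this] at hzT
      exact hz0 hzT
    · have : z ∈ Ky := by rw [hKy, Finset.mem_filter]; exact ⟨hzK, h'⟩
      have := Ky.min'_le z this
      rw [← hydef] at this
      simp only [Fin.le_def] at this
      omega
  have hxyT : (x, y) ∈ T := gap hT hx1 hxy hxK hyK hgap
  obtain ⟨c, hxc, hcy, hExc, hEcy⟩ := apex hT hx1 hxy hxyT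
  have hc0 : ((0 : Fin (n+2)), c) ∉ T := hgap c hxc hcy
  have hcdiag : IsDiag n ((0 : Fin (n+2)), c) := by
    refine ⟨by simp only [Fin.lt_def]; omega, ?_⟩
    rintro (h' | ⟨-, h'⟩)
    · simp at h'; omega
    · simp at h'; omega
  set T' := insert ((0 : Fin (n+2)), c) (T.erase (x, y)) with hT'def
  have hmemT' : ∀ g, g ∈ T' ↔ (g = ((0 : Fin (n+2)), c) ∨ (g ∈ T ∧ g ≠ (x, y))) := by
    intro g
    simp only [hT'def, Finset.mem_insert, Finset.mem_erase]
    exact or_congr Iff.rfl and_comm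
  -- key: (0, c) crosses nothing in T except possibly (x, y)
  have key : ∀ f ∈ T, f ≠ (x, y) → ¬ Cross n ((0 : Fin (n+2)), c) f := by
    intro f hf hfne hcr
    simp only [Cross, Fin.lt_def] at hcr
    have hq2 : (f.2 : ℕ) ≤ n + 1 := Nat.lt_succ_iff.mp f.2.isLt
    rcases hcr with ⟨h1, h2, h3⟩ | ⟨h1, -, -⟩
    · -- 0 < f.1 < c < f.2
      rcases Nat.lt_trichotomy (f.1 : ℕ) (x : ℕ) with hpx | hpx | hpx
      · -- f crosses (0, x)
        rcases hxK with hxs | hxT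
        · omega
        · refine hT.2.1 _ hxT f hf (pair_ne (Or.inl (by omega))) ?_
          exact Or.inl ⟨by simp only [Fin.lt_def]; omega, by simp only [Fin.lt_def]; omega,
            by simp only [Fin.lt_def]; omega⟩
      · -- f.1 = x
        rcases Nat.lt_trichotomy (f.2 : ℕ) (y : ℕ) with hqy | hqy | hqy
        · -- f crosses (c, y)
          refine not_cross_edge hT hEcy hf (pair_ne (Or.inl (by omega))) ?_
          exact Or.inr ⟨by simp only [Fin.lt_def]; omega, by simp only [Fin.lt_def]; omega,
            by simp only [Fin.lt_def]; omega⟩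
        · exact hfne (Prod.ext (Fin.ext hpx) (Fin.ext hqy))
        · -- f crosses (0, y)
          rcases hyK with hys | hyT
          · omega
          · refine hT.2.1 _ hyT f hf (pair_ne (Or.inl (by omega))) ?_
            exact Or.inl ⟨by simp only [Fin.lt_def]; omega, by simp only [Fin.lt_def]; omega,
              by simp only [Fin.lt_def]; omega⟩
      · -- f crosses (x, c)
        refine not_cross_edge hT hExc hf (pair_ne (Or.inl (by omega))) ?_
        exact Or.inl ⟨by simp only [Fin.lt_def]; omega, by simp only [Fin.lt_def]; omega,
          by simp only [Fin.lt_def]; omega⟩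
    · omega
  have hTri' : IsTriangulation n T' := by
    refine ⟨?_, ?_, ?_⟩
    · intro g hg
      rcases (hmemT' g).mp hg with rfl | ⟨hg, -⟩
      · exact hcdiag
      · exact hT.1 g hg
    · intro g hg f hf hne hcr
      rcases (hmemT' g).mp hg with rfl | ⟨hgT, hgne⟩
      · rcases (hmemT' f).mp hf with rfl | ⟨hfT, hfne⟩
        · exact hne rfl
        · exact key f hfT hfne hcr
      · rcases (hmemT' f).mp hf with rfl | ⟨hfT, hfne⟩
        · exact key g hgT hgne (cross_symm hcr)
        · exact hT.2.1 g hgT f hfT hne hcr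
    · intro g hgdiag hgT'
      rw [hmemT'] at hgT'
      push_neg at hgT'
      obtain ⟨hgne0c, hgor⟩ := hgT'
      by_cases hgxy : g = (x, y)
      · -- (x,y) itself : crossed by (0,c)
        have hg1 : (g.1 : ℕ) = (x : ℕ) := by rw [hgxy]
        have hg2 : (g.2 : ℕ) = (y : ℕ) := by rw [hgxy]
        refine ⟨((0 : Fin (n+2)), c), (hmemT' _).mpr (Or.inl rfl), ?_⟩
        exact mk_cross_right (Or.inr ⟨by omega, by omega, by omega⟩)
      · have hgnotT : g ∉ T := fun hgT => hgxy (hgor hgT)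
        obtain ⟨f, hf, hcr⟩ := hT.2.2 g hgdiag hgnotT
        by_cases hfxy : f = (x, y)
        · -- g crosses (x,y) : find a replacement in T'
          subst hfxy
          simp only [Cross, Fin.lt_def] at hcr
          have hxy1 : (((x, y).1 : Fin (n+2)) : ℕ) = (x : ℕ) := rfl
          have hxy2 : (((x, y).2 : Fin (n+2)) : ℕ) = (y : ℕ) := rfl
          have hv2 : (g.2 : ℕ) ≤ n + 1 := Nat.lt_succ_iff.mp g.2.isLt
          have hgd := hgdiag
          obtain ⟨hglt, -⟩ := hgd
          simp only [Fin.lt_def] at hglt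
          rcases hcr with ⟨h1, h2, h3⟩ | ⟨h1, h2, h3⟩
          · -- g.1 < x < g.2 < y
            rcases Nat.lt_trichotomy (g.2 : ℕ) (c : ℕ) with hvc | hvc | hvc
            · -- use (x, c)
              have hxcT : (x, c) ∈ T := by
                rcases hExc with hside | hmem'
                · rcases hside.2 with h' | ⟨h', -⟩
                  · omega
                  · omega
                · exact hmem'
              refine ⟨(x, c), (hmemT' _).mpr (Or.inr ⟨hxcT, pair_ne (Or.inr (by omega))⟩), ?_⟩
              exact mk_cross_right (Or.inl ⟨by omega, by omega, by omega⟩)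
            · -- g.2 = c
              rcases Nat.eq_zero_or_pos (g.1 : ℕ) with hu0 | hu0
              · exact absurd (Prod.ext (Fin.ext (show (g.1 : ℕ) = ((0 : Fin (n+2)) : ℕ) by omega)) (Fin.ext hvc)) hgne0c
              · have hx0T : ((0 : Fin (n+2)), x) ∈ T := by
                  rcases hxK with h' | h'
                  · omega
                  · exact h'
                refine ⟨((0 : Fin (n+2)), x),
                  (hmemT' _).mpr (Or.inr ⟨hx0T, pair_ne (Or.inl (by omega))⟩), ?_⟩
                exact mk_cross_right (Or.inr ⟨by omega, by omega, by omega⟩)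
            · -- use (c, y)
              have hcyT : (c, y) ∈ T := by
                rcases hEcy with hside | hmem'
                · rcases hside.2 with h' | ⟨h', -⟩
                  · omega
                  · omega
                · exact hmem'
              refine ⟨(c, y), (hmemT' _).mpr (Or.inr ⟨hcyT, pair_ne (Or.inl (by omega))⟩), ?_⟩
              exact mk_cross_right (Or.inl ⟨by omega, by omega, by omega⟩)
          · -- x < g.1 < y < g.2
            rcases Nat.lt_trichotomy (g.1 : ℕ) (c : ℕ) with huc | huc | huc
            · -- use (0, c)
              refine ⟨((0 : Fin (n+2)), c), (hmemT' _).mpr (Or.inl rfl), ?_⟩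
              exact mk_cross_right (Or.inr ⟨by omega, by omega, by omega⟩)
            · -- g.1 = c : use (0, y)
              have hy0T : ((0 : Fin (n+2)), y) ∈ T := by
                rcases hyK with h' | h'
                · omega
                · exact h'
              refine ⟨((0 : Fin (n+2)), y),
                (hmemT' _).mpr (Or.inr ⟨hy0T, pair_ne (Or.inl (by omega))⟩), ?_⟩
              exact mk_cross_right (Or.inr ⟨by omega, by omega, by omega⟩)
            · -- use (c, y)
              have hcyT : (c, y) ∈ T := by
                rcases hEcy with hside | hmem'
                · rcases hside.2 with h' | ⟨h', -⟩
                  · omega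
                  · omega
                · exact hmem'
              refine ⟨(c, y), (hmemT' _).mpr (Or.inr ⟨hcyT, pair_ne (Or.inl (by omega))⟩), ?_⟩
              exact mk_cross_right (Or.inr ⟨by omega, by omega, by omega⟩)
        · exact ⟨f, (hmemT' _).mpr (Or.inr ⟨hf, hfxy⟩), hcr⟩
  refine ⟨T', ⟨hT, hTri', (x, y), hxyT, ((0 : Fin (n+2)), c), hc0, hT'def⟩, ?_⟩
  unfold count0
  rw [hT'def, Finset.filter_insert, if_pos (by simp)]
  have herase : (T.erase (x, y)).filter (fun e => (e.1 : ℕ) = 0) =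
      T.filter (fun e => (e.1 : ℕ) = 0) := by
    rw [Finset.filter_erase]
    apply Finset.erase_eq_of_notMem
    simp only [Finset.mem_filter]
    rintro ⟨-, h'⟩
    omega
  rw [herase, Finset.card_insert_of_notMem]
  simp only [Finset.mem_filter]
  rintro ⟨h', -⟩
  exact hc0 h'

lemma all_zero_eq_fan {T : Finset (Fin (n+2) × Fin (n+2))} (hT : IsTriangulation n T)
    (h : ∀ e ∈ T, (e.1 : ℕ) = 0) : T = Fan n := by
  ext g
  simp only [Fan, Finset.mem_filter, Finset.mem_univ, true_and]
  constructor
  · intro hg; exact ⟨hT.1 g hg, h g hg⟩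
  · rintro ⟨hd, h0⟩
    by_contra hgT
    obtain ⟨f, hf, hcr⟩ := hT.2.2 g hd hgT
    have hf0 := h f hf
    rcases hcr with ⟨h1, -, -⟩ | ⟨h1, -, -⟩ <;> simp only [Fin.lt_def] at h1 <;> omega

lemma toFan : ∀ (m : ℕ) (T : Finset (Fin (n+2) × Fin (n+2))), IsTriangulation n T →
    n - 1 - count0 n T ≤ m →
    ∃ l, List.Chain (Flip n) T l ∧ (T :: l).getLast (by simp) = Fan n ∧
      l.length + count0 n T ≤ n - 1 := by
  intro m
  induction m with
  | zero =>
    intro T hT hm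
    by_cases h : ∃ e ∈ T, (e.1 : ℕ) ≠ 0
    · exfalso
      obtain ⟨T', hflip, hcnt⟩ := flip_step hT h
      have := count0_le hflip.2.1.1
      omega
    · push_neg at h
      exact ⟨[], List.Chain.nil, by simp [all_zero_eq_fan hT h],
        by simpa using count0_le hT.1⟩
  | succ m ih =>
    intro T hT hm
    by_cases h : ∃ e ∈ T, (e.1 : ℕ) ≠ 0
    · obtain ⟨T', hflip, hcnt⟩ := flip_step hT h
      have hle := count0_le hflip.2.1.1
      obtain ⟨l, hch, hlast, hlen⟩ := ih T' hflip.2.1 (by omega)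
      refine ⟨T' :: l, List.Chain.cons hflip hch, ?_, by simp only [List.length_cons]; omega⟩
      rw [List.getLast_cons (by simp)]
      exact hlast
    · push_neg at h
      exact ⟨[], List.Chain.nil, by simp [all_zero_eq_fan hT h],
        by simpa using count0_le hT.1⟩

lemma chain_append {α : Type*} {R : α → α → Prop} :
    ∀ (l₁ : List α) (a : α) (l₂ : List α), List.Chain R a l₁ →
      List.Chain R ((a :: l₁).getLast (by simp)) l₂ → List.Chain R a (l₁ ++ l₂) := by
  intro l₁
  induction l₁ with
  | nil => intro a l₂ _ h2; simpa using h2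
  | cons c l ih =>
    intro a l₂ h1 h2
    rcases List.chain_cons.mp h1 with ⟨hac, h1'⟩
    refine List.chain_cons.mpr ⟨hac, ih c l₂ h1' ?_⟩
    rwa [List.getLast_cons (by simp)] at h2

lemma getLast_cons_append {α : Type*} :
    ∀ (l₁ : List α) (a : α) (l₂ : List α) (h : l₂ ≠ []),
      (a :: (l₁ ++ l₂)).getLast (by simp) = l₂.getLast h := by
  intro l₁
  induction l₁ with
  | nil => intro a l₂ h; rw [List.nil_append, List.getLast_cons h]
  | cons c l ih =>
    intro a l₂ h
    rw [List.getLast_cons (by simp)]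
    exact ih c l₂ h

lemma chain_reverse {α : Type*} {R : α → α → Prop} (hsymm : ∀ x y, R x y → R y x) :
    ∀ (l : List α) (a b : α), List.Chain R a l → (a :: l).getLast (by simp) = b →
      ∃ r : List α, r.length = l.length ∧ List.Chain R b r ∧
        (b :: r).getLast (by simp) = a := by
  intro l
  induction l with
  | nil =>
    intro a b _ hlast
    simp only [List.getLast_singleton] at hlast
    exact ⟨[], rfl, List.Chain.nil, by simp [hlast]⟩
  | cons c l ih =>
    intro a b hch hlast
    rcases List.chain_cons.mp hch with ⟨hac, hch'⟩
    have hlast' : (c :: l).getLast (by simp) = b := by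
      rw [← hlast]
      exact (List.getLast_cons (by simp)).symm
    obtain ⟨r, hlen, hch2, hlast2⟩ := ih c b hch' hlast'
    refine ⟨r ++ [a], by simp [hlen], ?_, ?_⟩
    · refine chain_append r b [a] hch2 ?_
      rw [hlast2]
      exact List.chain_cons.mpr ⟨hsymm _ _ hac, List.Chain.nil⟩
    · have := getLast_cons_append r b [a] (by simp)
      simpa using this

end FlipAux

/-- For `n ≥ 2`, any two triangulations of a convex polygon with `n+2` vertices
can be transformed into each other by a sequence of at most `2n - 2` diagonal flips. -/
theorem triangulations_flip_distance (n : ℕ) (hn : 2 ≤ n)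
    (T₁ T₂ : Finset (Fin (n + 2) × Fin (n + 2)))
    (h₁ : IsTriangulation n T₁) (h₂ : IsTriangulation n T₂) :
    ∃ l : List (Finset (Fin (n + 2) × Fin (n + 2))),
      l.length ≤ 2 * n - 2 ∧ List.Chain (Flip n) T₁ l ∧
        (T₁ :: l).getLast (by simp) = T₂ := by
  obtain ⟨l₁, hch₁, hlast₁, hlen₁⟩ := FlipAux.toFan n T₁ h₁ (by omega)
  obtain ⟨l₂, hch₂, hlast₂, hlen₂⟩ := FlipAux.toFan n T₂ h₂ (by omega)
  obtain ⟨r, hrlen, hrch, hrlast⟩ :=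
    FlipAux.chain_reverse (fun x y h => FlipAux.flip_symm h) l₂ T₂ (FlipAux.Fan n) hch₂ hlast₂
  refine ⟨l₁ ++ r, ?_, ?_, ?_⟩
  · simp only [List.length_append]
    omega
  · exact FlipAux.chain_append l₁ T₁ r hch₁ (by rw [hlast₁]; exact hrch)
  · cases r with
    | nil =>
      have hT₂ : FlipAux.Fan n = T₂ := by simpa using hrlast
      rw [List.append_nil]
      rw [← hT₂, ← hlast₁]
    | cons c r' =>
      rw [FlipAux.getLast_cons_append l₁ T₁ (c :: r') (by simp)]
      rw [← hrlast]
      exact (List.getLast_cons (by simp)).symm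
end
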